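/- The number of unordered direct sum decompositions (splittings) of an n-dimensional F_q-vector space into nonzero subspaces, summed with weight x^n/γ_n, gives the formal power series identity: ∑_{n≥0} s_n x^n/γ_n = exp(∑_{n≥1} x^n/γ_n), where s_n is the number of splittings of E_n (with s_0 = 1). -/

import Mathlib

/-- `γ_m = |GL_m(F_q)| = ∏_{i=0}^{m-1} (q^m - q^i)`. -/
def gammaQ (q m : ℕ) : ℕ := ∏ i ∈ Finset.range m, (q ^ m - q ^ i)

/-- The number of splittings (unordered direct sum decompositions into nonzero
subspaces) of the `n`-dimensional space `F^n`. -/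
noncomputable def splitCount (F : Type) [Field F] [Fintype F] (n : ℕ) : ℕ :=
  Nat.card {D : Finset (Submodule F (Fin n → F)) //
    (⊥ : Submodule F (Fin n → F)) ∉ D ∧
    sSupIndep (D : Set (Submodule F (Fin n → F))) ∧
    sSup (D : Set (Submodule F (Fin n → F))) = ⊤}

/-- The formal exponential `exp(f)` of a power series `f` with zero constant term,
given coefficientwise by `exp(f) = ∑_{n ≥ 0} fⁿ/n!`. -/
noncomputable def expComp (f : PowerSeries ℚ) : PowerSeries ℚ :=
  PowerSeries.mk fun j =>
    ∑ n ∈ Finset.range (j + 1), (n.factorial : ℚ)⁻¹ * PowerSeries.coeff j (f ^ n)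




open Finset

section helpers

variable {F : Type} [Field F] [Fintype F]

lemma gammaQ_pos (m : ℕ) : 0 < gammaQ (Fintype.card F) m := by
  apply Finset.prod_pos
  intro i hi
  have h1 : 1 < Fintype.card F := Fintype.one_lt_card
  have := Nat.pow_lt_pow_right h1 (mem_range.mp hi)
  omega

/-- number of bases of an `n`-dimensional space is `gammaQ q n`. -/
lemma card_basis (n : ℕ) (W : Type) [AddCommGroup W] [Module F W] [Module.Finite F W]
    (h : Module.finrank F W = n) :
    Nat.card (Module.Basis (Fin n) F W) = gammaQ (Fintype.card F) n := by
  classical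
  let e : W ≃ₗ[F] (Fin n → F) :=
    ((Module.finBasis F W).reindex (finCongr h)).equivFun
  let E1 : Module.Basis (Fin n) F W ≃ Module.Basis (Fin n) F (Fin n → F) :=
    { toFun := fun b => b.map e
      invFun := fun b => b.map e.symm
      left_inv := fun b => by
        apply DFunLike.coe_injective; funext i
        simp [Module.Basis.map_apply]
      right_inv := fun b => by
        apply DFunLike.coe_injective; funext i
        simp [Module.Basis.map_apply] }
  let E2 : Module.Basis (Fin n) F (Fin n → F) ≃ ((Fin n → F) ≃ₗ[F] (Fin n → F)) :=
    { toFun := fun b => b.equivFun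
      invFun := fun e => Module.Basis.ofEquivFun e
      left_inv := fun b => b.ofEquivFun_equivFun
      right_inv := fun e => Module.Basis.equivFun_ofEquivFun e }
  let E3 : ((Fin n → F) ≃ₗ[F] (Fin n → F)) ≃ GL (Fin n) F :=
    ((Matrix.GeneralLinearGroup.toLin.trans
      (LinearMap.GeneralLinearGroup.generalLinearEquiv F (Fin n → F))).toEquiv).symm
  rw [Nat.card_congr ((E1.trans E2).trans E3), Matrix.card_GL_field]
  rw [gammaQ, ← Fin.prod_univ_eq_prod_range]

lemma nat_card_sigma {ι : Type*} [Fintype ι] (f : ι → Type*) [∀ i, Finite (f i)] :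
    Nat.card (Σ i, f i) = ∑ i, Nat.card (f i) := by
  classical
  letI : ∀ i, Fintype (f i) := fun i => Fintype.ofFinite _
  simp [Nat.card_eq_fintype_card, Fintype.card_sigma]

lemma sum_finsuppAntidiag_eq (g : ℕ → ℚ) (k j : ℕ) :
    ∑ l ∈ Finset.finsuppAntidiag (range k) j, ∏ i ∈ range k, g (l i)
      = ∑ m ∈ Finset.Nat.antidiagonalTuple k j, ∏ i, g (m i) := by
  classical
  refine Finset.sum_nbij' (i := fun l => fun i : Fin k => l i.val)
    (j := fun m => Finsupp.onFinset (range k)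
      (fun t => if h : t < k then m ⟨t, h⟩ else 0) ?_) ?_ ?_ ?_ ?_ ?_
  · intro t ht
    rw [mem_range]
    by_contra hk
    simp [dif_neg hk] at ht
  · intro l hl
    rw [Finset.mem_finsuppAntidiag] at hl
    rw [Finset.Nat.mem_antidiagonalTuple]
    rw [← hl.1, Finset.sum_range fun t => l t]
  · intro m hm
    rw [Finset.Nat.mem_antidiagonalTuple] at hm
    rw [Finset.mem_finsuppAntidiag]
    constructor
    · rw [← hm]
      rw [Finset.sum_range]
      apply Finset.sum_congr rfl
      intro i _
      simp [Finsupp.onFinset_apply, i.isLt]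
    · exact Finsupp.support_onFinset_subset
  · intro l hl
    rw [Finset.mem_finsuppAntidiag] at hl
    ext t
    simp only [Finsupp.onFinset_apply]
    split
    · rfl
    · rename_i hk
      by_contra hne
      have : t ∈ l.support := Finsupp.mem_support_iff.mpr fun h => hne h.symm
      have := hl.2 this
      rw [mem_range] at this
      exact hk this
  · intro m hm
    funext i
    simp [Finsupp.onFinset_apply, i.isLt]
  · intro l hl
    rw [Finset.prod_range fun t => g (l t)]

end helpers

open Submodule

section key

variable {F : Type} [Field F] [Fintype F] {j k : ℕ}

/-- ordered decompositions with prescribed dimensions -/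
def Pm (m : Fin k → ℕ) (f : Fin k → Submodule F (Fin j → F)) : Prop :=
  (∀ i, f i ≠ ⊥) ∧ iSupIndep f ∧ (⨆ i, f i) = ⊤ ∧ ∀ i, Module.finrank F (f i) = m i

instance : Finite (Submodule F (Fin j → F)) :=
  Finite.of_injective (fun p => (p : Set (Fin j → F))) SetLike.coe_injective

instance {ι W : Type*} [Finite ι] [Finite W] [AddCommGroup W] [Module F W] :
    Finite (Module.Basis ι F W) :=
  Finite.of_injective (fun b => (b : ι → W)) DFunLike.coe_injective

variable (m : Fin k → ℕ)

/-- from a basis indexed by a sigma type, the spans of the blocks -/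
noncomputable def Phi (b : Module.Basis ((i : Fin k) × Fin (m i)) F (Fin j → F)) :
    Fin k → Submodule F (Fin j → F) :=
  fun i => Submodule.span F (Set.range (fun x : Fin (m i) => b ⟨i, x⟩))

lemma hli (b : Module.Basis ((i : Fin k) × Fin (m i)) F (Fin j → F)) (i : Fin k) :
    LinearIndependent F (fun x : Fin (m i) => b ⟨i, x⟩) :=
  b.linearIndependent.comp (Sigma.mk i) sigma_mk_injective

lemma range_block (b : Module.Basis ((i : Fin k) × Fin (m i)) F (Fin j → F)) (i : Fin k) :
    Set.range (fun x : Fin (m i) => b ⟨i, x⟩) = b '' {p | p.1 = i} := by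
  ext v
  constructor
  · rintro ⟨x, rfl⟩; exact ⟨⟨i, x⟩, rfl, rfl⟩
  · rintro ⟨⟨i', x⟩, hp, rfl⟩
    cases hp
    exact ⟨x, rfl⟩

lemma Phi_mem (hpos : ∀ i, 0 < m i) (b : Module.Basis ((i : Fin k) × Fin (m i)) F (Fin j → F)) :
    Pm m (Phi m b) := by
  have hfr : ∀ i, Module.finrank F (Phi m b i) = m i := by
    intro i
    rw [Phi, finrank_span_eq_card (hli m b i)]
    simp
  have hindep : iSupIndep (Phi m b) := by
    intro i
    have hd : Disjoint (span F (b '' {p | p.1 = i})) (span F (b '' {p | p.1 = i}ᶜ)) :=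
      b.linearIndependent.disjoint_span_image disjoint_compl_right
    refine Disjoint.mono_right ?_ (by rwa [Phi, range_block])
    refine iSup_le fun i' => iSup_le fun hi' => ?_
    rw [Phi, range_block]
    apply Submodule.span_mono
    apply Set.image_mono
    intro p hp
    simp only [Set.mem_setOf_eq] at hp
    simp only [Set.mem_compl_iff, Set.mem_setOf_eq, hp]
    exact hi'
  refine ⟨?_, hindep, ?_, hfr⟩
  · intro i h
    have h1 := hfr i
    have h2 := hpos i
    rw [h, finrank_bot] at h1
    omega
  · have hU : (⋃ i, Set.range (fun x : Fin (m i) => b ⟨i, x⟩)) = Set.range b := by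
      ext v
      simp only [Set.mem_iUnion, Set.mem_range, Sigma.exists]
    simp only [Phi, ← Submodule.span_iUnion, hU, b.span_eq]


noncomputable def fiberEquiv (hpos : ∀ i, 0 < m i)
    (f : {f : Fin k → Submodule F (Fin j → F) // Pm m f}) :
    {b : Module.Basis ((i : Fin k) × Fin (m i)) F (Fin j → F) //
        (⟨Phi m b, Phi_mem m hpos b⟩ : {f // Pm m f}) = f} ≃
      ((i : Fin k) → Module.Basis (Fin (m i)) F (f.1 i)) := by
  have hInt : DirectSum.IsInternal f.1 :=
    (DirectSum.isInternal_submodule_iff_iSupIndep_and_iSup_eq_top _).mpr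
      ⟨f.2.2.1, f.2.2.2.1⟩
  exact {
    toFun := fun b => fun i =>
      (Module.Basis.span (hli m b.1 i)).map (LinearEquiv.ofEq _ _ (by
        have h1 : Phi m b.1 = f.1 := congrArg Subtype.val b.2
        exact congrFun h1 i))
    invFun := fun v => ⟨hInt.collectedBasis v, by
      apply Subtype.ext
      funext i
      show Submodule.span F (Set.range fun x : Fin (m i) =>
        hInt.collectedBasis v ⟨i, x⟩) = f.1 i
      have hc : (fun x : Fin (m i) => hInt.collectedBasis v ⟨i, x⟩)
          = (f.1 i).subtype ∘ (v i) := by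
        funext x
        rw [hInt.collectedBasis_coe v]
        rfl
      rw [hc, Set.range_comp, Submodule.span_image, (v i).span_eq,
        Submodule.map_subtype_top]⟩
    left_inv := fun b => by
      apply Subtype.ext
      apply DFunLike.coe_injective
      funext p
      rcases p with ⟨i, x⟩
      beta_reduce
      rw [hInt.collectedBasis_coe]
      simp only [Module.Basis.map_apply, LinearEquiv.coe_ofEq_apply, Module.Basis.span_apply]
      rfl
    right_inv := fun v => by
      funext i
      apply DFunLike.coe_injective
      funext x
      apply Subtype.val_injective
      beta_reduce
      simp only [Module.Basis.map_apply, LinearEquiv.coe_ofEq_apply, Module.Basis.span_apply]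
      show (hInt.collectedBasis v ⟨i, x⟩ : Fin j → F) = _
      rw [hInt.collectedBasis_coe] }

noncomputable def keyEquiv (hpos : ∀ i, 0 < m i) :
    Module.Basis ((i : Fin k) × Fin (m i)) F (Fin j → F) ≃
      Σ f : {f : Fin k → Submodule F (Fin j → F) // Pm m f},
        ((i : Fin k) → Module.Basis (Fin (m i)) F (f.1 i)) :=
  ((Equiv.sigmaFiberEquiv (fun b => (⟨Phi m b, Phi_mem m hpos b⟩ :
      {f : Fin k → Submodule F (Fin j → F) // Pm m f}))).symm).trans
    (Equiv.sigmaCongrRight (fiberEquiv m hpos))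

/-- key counting identity -/
lemma key_count (hm : ∑ i, m i = j) (hpos : ∀ i, 0 < m i) :
    Nat.card {f : Fin k → Submodule F (Fin j → F) // Pm m f} * ∏ i, gammaQ (Fintype.card F) (m i)
      = gammaQ (Fintype.card F) j := by
  classical
  have hcard : Fintype.card ((i : Fin k) × Fin (m i)) = j := by
    simp [Fintype.card_sigma, hm]
  have e0 : ((i : Fin k) × Fin (m i)) ≃ Fin j := Fintype.equivFinOfCardEq hcard
  have hB : Nat.card (Module.Basis ((i : Fin k) × Fin (m i)) F (Fin j → F))
      = gammaQ (Fintype.card F) j := by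
    have eB : Module.Basis ((i : Fin k) × Fin (m i)) F (Fin j → F)
        ≃ Module.Basis (Fin j) F (Fin j → F) :=
      { toFun := fun b => b.reindex e0
        invFun := fun b => b.reindex e0.symm
        left_inv := fun b => by
          apply DFunLike.coe_injective; funext p; simp
        right_inv := fun b => by
          apply DFunLike.coe_injective; funext p; simp }
    rw [Nat.card_congr eB, card_basis j _ (by simp)]
  rw [← hB, Nat.card_congr (keyEquiv m hpos)]
  letI : Fintype {f : Fin k → Submodule F (Fin j → F) // Pm m f} := Fintype.ofFinite _
  rw [nat_card_sigma]
  have hterm : ∀ f : {f : Fin k → Submodule F (Fin j → F) // Pm m f},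
      Nat.card ((i : Fin k) → Module.Basis (Fin (m i)) F (f.1 i))
        = ∏ i, gammaQ (Fintype.card F) (m i) := by
    intro f
    rw [Nat.card_pi]
    exact Finset.prod_congr rfl fun i _ => card_basis (m i) _ (f.2.2.2.2 i)
  simp_rw [hterm]
  rw [Finset.sum_const, smul_eq_mul, Finset.card_univ, Nat.card_eq_fintype_card]

omit [Fintype F] in
lemma dims_sum {ι : Type} [Fintype ι] (f : ι → Submodule F (Fin j → F))
    (h1 : iSupIndep f) (h2 : (⨆ i, f i) = ⊤) :
    ∑ i, Module.finrank F (↥(f i)) = j := by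
  classical
  have hInt : DirectSum.IsInternal f :=
    (DirectSum.isInternal_submodule_iff_iSupIndep_and_iSup_eq_top f).mpr ⟨h1, h2⟩
  have hb := Module.finrank_eq_card_basis
    (hInt.collectedBasis (fun i => Module.finBasis F (f i)))
  have hV : Module.finrank F (Fin j → F) = j := by simp
  rw [hV, Fintype.card_sigma] at hb
  simp only [Fintype.card_fin] at hb
  exact hb.symm

/-- The type of ordered decompositions into `k` nonzero parts. -/
def Od (j k : ℕ) : Type :=
  {f : Fin k → Submodule F (Fin j → F) //
    (∀ i, f i ≠ ⊥) ∧ iSupIndep f ∧ (⨆ i, f i) = ⊤}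

instance : Finite (Od (F := F) j k) := by
  unfold Od; infer_instance

/-- fibers of the dimension-vector map -/
def odFiberEquiv (m : Fin k → ℕ) :
    {g : Od (F := F) j k // (fun i => Module.finrank F (↥(g.1 i))) = m} ≃
      {f : Fin k → Submodule F (Fin j → F) // Pm m f} where
  toFun g := ⟨g.1.1, g.1.2.1, g.1.2.2.1, g.1.2.2.2, fun i => congrFun g.2 i⟩
  invFun f := ⟨⟨f.1, f.2.1, f.2.2.1, f.2.2.2.1⟩, funext fun i => f.2.2.2.2 i⟩
  left_inv g := by apply Subtype.ext; apply Subtype.ext; rfl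
  right_inv f := rfl

/-- the weighted count of a single fiber, rationally -/
lemma fiber_count_rat (m : Fin k → ℕ) (hm : ∑ i, m i = j) :
    (Nat.card {f : Fin k → Submodule F (Fin j → F) // Pm m f} : ℚ)
      = (gammaQ (Fintype.card F) j : ℚ) *
        ∏ i, (if m i = 0 then (0 : ℚ) else 1 / (gammaQ (Fintype.card F) (m i) : ℚ)) := by
  by_cases hpos : ∀ i, 0 < m i
  · have hkey := key_count (F := F) m hm hpos
    have hγ : ∀ n, ((gammaQ (Fintype.card F) n : ℚ)) ≠ 0 := by
      intro n
      have h0 : 0 < gammaQ (Fintype.card F) n := gammaQ_pos n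
      exact_mod_cast h0.ne'
    have hprod : ∏ i, (if m i = 0 then (0 : ℚ) else 1 / (gammaQ (Fintype.card F) (m i) : ℚ))
        = (∏ i, (gammaQ (Fintype.card F) (m i) : ℚ))⁻¹ := by
      rw [← Finset.prod_inv_distrib]
      refine Finset.prod_congr rfl fun i _ => ?_
      rw [if_neg (hpos i).ne', one_div]
    rw [hprod]
    have hcast : (Nat.card {f : Fin k → Submodule F (Fin j → F) // Pm m f} : ℚ) *
        ∏ i, (gammaQ (Fintype.card F) (m i) : ℚ) = (gammaQ (Fintype.card F) j : ℚ) := by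
      exact_mod_cast congrArg (Nat.cast : ℕ → ℚ) hkey
    have hprodne : (∏ i, (gammaQ (Fintype.card F) (m i) : ℚ)) ≠ 0 :=
      Finset.prod_ne_zero_iff.mpr fun i _ => hγ (m i)
    field_simp
    linarith [hcast]
  · push_neg at hpos
    obtain ⟨i0, hi0⟩ := hpos
    have hm0 : m i0 = 0 := Nat.le_zero.mp hi0
    have hempty : IsEmpty {f : Fin k → Submodule F (Fin j → F) // Pm m f} := by
      constructor
      rintro ⟨f, hne, _, _, hfr⟩
      apply hne i0
      have : Module.finrank F (↥(f i0)) = 0 := by rw [hfr i0, hm0]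
      exact Submodule.finrank_eq_zero.mp this
    rw [Nat.card_of_isEmpty]
    rw [Finset.prod_eq_zero (Finset.mem_univ i0) (by rw [if_pos hm0])]
    simp

/-- counting ordered decompositions, rationally -/
lemma od_count (j k : ℕ) :
    (Nat.card (Od (F := F) j k) : ℚ)
      = (gammaQ (Fintype.card F) j : ℚ) *
        ∑ m ∈ Finset.Nat.antidiagonalTuple k j,
          ∏ i, (if m i = 0 then (0 : ℚ) else 1 / (gammaQ (Fintype.card F) (m i) : ℚ)) := by
  classical
  have hd : ∀ g : Od (F := F) j k,
      (fun i => Module.finrank F (↥(g.1 i))) ∈ Finset.Nat.antidiagonalTuple k j := by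
    intro g
    rw [Finset.Nat.mem_antidiagonalTuple]
    exact dims_sum g.1 g.2.2.1 g.2.2.2
  let d : Od (F := F) j k → {x // x ∈ Finset.Nat.antidiagonalTuple k j} :=
    fun g => ⟨fun i => Module.finrank F (↥(g.1 i)), hd g⟩
  have he := (Equiv.sigmaFiberEquiv d).symm
  rw [Nat.card_congr he, nat_card_sigma]
  rw [Finset.mul_sum]
  rw [← Finset.sum_attach (Finset.Nat.antidiagonalTuple k j)
    (fun m => (gammaQ (Fintype.card F) j : ℚ) *
      ∏ i, (if m i = 0 then (0 : ℚ) else 1 / (gammaQ (Fintype.card F) (m i) : ℚ)))]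
  rw [Nat.cast_sum]
  refine Finset.sum_congr rfl fun m _ => ?_
  have : {g : Od (F := F) j k // d g = m} ≃
      {f : Fin k → Submodule F (Fin j → F) // Pm m.1 f} := by
    refine (Equiv.subtypeEquivRight ?_).trans (odFiberEquiv m.1)
    intro g
    constructor
    · intro h; exact congrArg Subtype.val h
    · intro h; exact Subtype.ext h
  rw [Nat.card_congr this,
    fiber_count_rat m.1 (Finset.Nat.mem_antidiagonalTuple.mp m.2)]

/-- the splitting type from the theorem statement -/
def Sp (j : ℕ) : Type :=
  {D : Finset (Submodule F (Fin j → F)) //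
    (⊥ : Submodule F (Fin j → F)) ∉ D ∧
    sSupIndep (D : Set (Submodule F (Fin j → F))) ∧
    sSup (D : Set (Submodule F (Fin j → F))) = ⊤}

instance : Finite (Sp (F := F) j) := by
  unfold Sp; infer_instance

omit [Fintype F] in
lemma sp_card_le (D : Sp (F := F) j) : D.1.card ≤ j := by
  classical
  have hind : iSupIndep (fun x : {x // x ∈ (D.1 : Set (Submodule F (Fin j → F)))} => x.1) :=
    (sSupIndep_iff _).mp D.2.2.1
  have hsup : (⨆ x : {x // x ∈ (D.1 : Set (Submodule F (Fin j → F)))}, x.1) = ⊤ := by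
    rw [← sSup_eq_iSup']
    exact D.2.2.2
  have hsum := dims_sum _ hind hsup
  have hone : ∀ x : {x // x ∈ (D.1 : Set (Submodule F (Fin j → F)))},
      1 ≤ Module.finrank F (↥(x.1)) := by
    rintro ⟨x, hx⟩
    rw [Nat.one_le_iff_ne_zero]
    intro h0
    have : x = ⊥ := Submodule.finrank_eq_zero.mp h0
    rw [this] at hx
    exact D.2.1 hx
  calc D.1.card = Fintype.card {x // x ∈ (D.1 : Set (Submodule F (Fin j → F)))} := by
        simp
    _ = ∑ _x : {x // x ∈ (D.1 : Set (Submodule F (Fin j → F)))}, 1 := by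
        rw [Finset.sum_const, Finset.card_univ, smul_eq_mul, mul_one]
    _ ≤ ∑ x : {x // x ∈ (D.1 : Set (Submodule F (Fin j → F)))},
          Module.finrank F (↥(x.1)) := Finset.sum_le_sum fun x _ => hone x
    _ = j := hsum

/-- splittings with exactly `k` parts -/
def SpK (j k : ℕ) : Type := {D : Sp (F := F) j // D.1.card = k}

instance : Finite (SpK (F := F) j k) := by
  unfold SpK; infer_instance

omit [Fintype F] in
lemma od_injective (f : Od (F := F) j k) : Function.Injective f.1 :=
  f.2.2.1.injective f.2.1

/-- the forgetful map from ordered decompositions to splittings -/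
noncomputable def odToSpK (f : Od (F := F) j k) : SpK (F := F) j k := by
  classical
  refine ⟨⟨Finset.image f.1 Finset.univ, ?_, ?_, ?_⟩, ?_⟩
  · intro hmem
    obtain ⟨i, _, hi⟩ := Finset.mem_image.mp hmem
    exact f.2.1 i hi
  · rw [Finset.coe_image, Finset.coe_univ, Set.image_univ]
    exact f.2.2.1.sSupIndep_range
  · rw [Finset.coe_image, Finset.coe_univ, Set.image_univ, sSup_range]
    exact f.2.2.2
  · rw [Finset.card_image_of_injective _ (od_injective f), Finset.card_univ,
      Fintype.card_fin]

/-- fibers of the forgetful map: orderings of a splitting -/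
noncomputable def odFiberOrderEquiv (s : SpK (F := F) j k) :
    {f : Od (F := F) j k // odToSpK f = s} ≃ (Fin k ≃ {x // x ∈ s.1.1}) := by
  classical
  refine
    { toFun := fun f => Equiv.ofBijective
        (fun i => (⟨f.1.1 i, ?_⟩ : {x // x ∈ s.1.1}))
        ((Fintype.bijective_iff_injective_and_card _).mpr ⟨?_, by
          simp [Fintype.card_coe, s.2]⟩)
      invFun := fun g => ⟨⟨fun i => (g i).1, ?_, ?_, ?_⟩, ?_⟩
      left_inv := ?_
      right_inv := ?_ }
  · -- membership
    have him : (odToSpK f.1).1.1 = s.1.1 :=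
      congrArg (fun t : SpK (F := F) j k => t.1.1) f.2
    rw [← him]
    exact Finset.mem_image.mpr ⟨i, Finset.mem_univ i, rfl⟩
  · -- injectivity
    intro a b hab
    exact od_injective f.1 (congrArg Subtype.val hab)
  · -- nonbot
    intro i hbot
    apply s.1.2.1
    have hb : (g i).1 = ⊥ := hbot
    have hmem := (g i).2
    rwa [hb] at hmem
  · -- iSupIndep
    have hind : iSupIndep (fun x : {x // x ∈ (s.1.1 : Set (Submodule F (Fin j → F)))} => x.1) :=
      (sSupIndep_iff _).mp s.1.2.2.1
    have := hind.comp (f := fun i => (⟨(g i).1, (g i).2⟩ :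
        {x // x ∈ (s.1.1 : Set (Submodule F (Fin j → F)))}))
      (fun a b hab => g.injective (Subtype.ext (congrArg Subtype.val hab)))
    exact this
  · -- iSup eq top
    have hrange : Set.range (fun i => ((g i).1 : Submodule F (Fin j → F)))
        = (s.1.1 : Set (Submodule F (Fin j → F))) := by
      ext x
      constructor
      · rintro ⟨i, rfl⟩; exact (g i).2
      · intro hx
        obtain ⟨i, hi⟩ := g.surjective ⟨x, hx⟩
        exact ⟨i, congrArg Subtype.val hi⟩
    rw [← sSup_range, hrange]
    exact s.1.2.2.2
  · -- odToSpK of this = s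
    apply Subtype.ext
    apply Subtype.ext
    show Finset.image (fun i => (g i).1) Finset.univ = s.1.1
    apply Finset.ext
    intro x
    simp only [Finset.mem_image, Finset.mem_univ, true_and]
    constructor
    · rintro ⟨i, rfl⟩; exact (g i).2
    · intro hx
      obtain ⟨i, hi⟩ := g.surjective ⟨x, hx⟩
      exact ⟨i, congrArg Subtype.val hi⟩
  · -- left inverse
    intro f
    apply Subtype.ext
    apply Subtype.ext
    rfl
  · -- right inverse
    intro g
    apply Equiv.ext
    intro i
    apply Subtype.ext
    rfl

lemma od_card_eq (j k : ℕ) :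
    Nat.card (Od (F := F) j k) = k.factorial * Nat.card (SpK (F := F) j k) := by
  classical
  letI : Fintype (SpK (F := F) j k) := Fintype.ofFinite _
  rw [Nat.card_congr (Equiv.sigmaFiberEquiv (odToSpK (F := F))).symm, nat_card_sigma]
  have hterm : ∀ s : SpK (F := F) j k,
      Nat.card {f : Od (F := F) j k // odToSpK f = s} = k.factorial := by
    intro s
    rw [Nat.card_congr (odFiberOrderEquiv s), Nat.card_eq_fintype_card]
    have e : Fin k ≃ {x // x ∈ s.1.1} :=
      (Fintype.equivFinOfCardEq (by simp [Fintype.card_coe, s.2])).symm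
    rw [Fintype.card_equiv e, Fintype.card_fin]
  simp_rw [hterm]
  rw [Finset.sum_const, Finset.card_univ, smul_eq_mul, Nat.card_eq_fintype_card,
    mul_comm]

lemma sp_card_eq (j : ℕ) :
    Nat.card (Sp (F := F) j) = ∑ k ∈ Finset.range (j + 1), Nat.card (SpK (F := F) j k) := by
  classical
  letI : Fintype (Sp (F := F) j) := Fintype.ofFinite _
  let c : Sp (F := F) j → Fin (j + 1) := fun D => ⟨D.1.card, Nat.lt_succ_of_le (sp_card_le D)⟩
  rw [Nat.card_congr (Equiv.sigmaFiberEquiv c).symm, nat_card_sigma]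
  rw [Finset.sum_range fun k => Nat.card (SpK (F := F) j k)]
  refine Finset.sum_congr rfl fun k _ => ?_
  refine congrArg Nat.card ?_
  refine Eq.symm ?_
  unfold SpK
  refine congrArg _ ?_
  funext D
  simp only [c, Fin.ext_iff]

end key

theorem splittings_generating_series' (F : Type) [Field F] [Fintype F] :
    PowerSeries.mk (fun n => (Nat.card (Sp (F := F) n) : ℚ) / (gammaQ (Fintype.card F) n : ℚ)) =
      expComp (PowerSeries.mk fun n =>
        if n = 0 then 0 else 1 / (gammaQ (Fintype.card F) n : ℚ)) := by
  classical
  apply PowerSeries.ext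
  intro j
  rw [PowerSeries.coeff_mk, expComp, PowerSeries.coeff_mk]
  have hγ0 : ((gammaQ (Fintype.card F) j : ℚ)) ≠ 0 := by
    have h0 : 0 < gammaQ (Fintype.card F) j := gammaQ_pos (F := F) j
    exact_mod_cast h0.ne'
  have hterm : ∀ k : ℕ,
      ((k.factorial : ℚ))⁻¹ * PowerSeries.coeff j
        ((PowerSeries.mk fun n => if n = 0 then (0:ℚ) else 1 / (gammaQ (Fintype.card F) n : ℚ)) ^ k)
      = (Nat.card (SpK (F := F) j k) : ℚ) / (gammaQ (Fintype.card F) j : ℚ) := by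
    intro k
    have h1 : PowerSeries.coeff j
        ((PowerSeries.mk fun n => if n = 0 then (0:ℚ) else 1 / (gammaQ (Fintype.card F) n : ℚ)) ^ k)
        = ∑ m ∈ Finset.Nat.antidiagonalTuple k j,
            ∏ i, (if m i = 0 then (0:ℚ) else 1 / (gammaQ (Fintype.card F) (m i) : ℚ)) := by
      rw [PowerSeries.coeff_pow]
      simp only [PowerSeries.coeff_mk]
      exact sum_finsuppAntidiag_eq
        (fun n => if n = 0 then (0:ℚ) else 1 / (gammaQ (Fintype.card F) n : ℚ)) k j
    have h2 := od_count (F := F) j k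
    have h3 : (Nat.card (Od (F := F) j k) : ℚ)
        = (k.factorial : ℚ) * (Nat.card (SpK (F := F) j k) : ℚ) := by
      exact_mod_cast od_card_eq (F := F) j k
    have hkey : (gammaQ (Fintype.card F) j : ℚ) *
        (∑ m ∈ Finset.Nat.antidiagonalTuple k j,
          ∏ i, (if m i = 0 then (0:ℚ) else 1 / (gammaQ (Fintype.card F) (m i) : ℚ)))
        = (k.factorial : ℚ) * (Nat.card (SpK (F := F) j k) : ℚ) := by
      rw [← h2, h3]
    have hfac : ((k.factorial : ℚ)) ≠ 0 := by
      exact_mod_cast k.factorial_ne_zero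
    rw [h1]
    field_simp
    linear_combination hkey
  rw [Finset.sum_congr rfl fun k _ => hterm k]
  rw [← Finset.sum_div]
  congr 1
  rw [sp_card_eq (F := F) j]
  push_cast
  rfl

/-- `∑_{n≥0} s_n xⁿ/γ_n = exp(∑_{n≥1} xⁿ/γ_n)`, where `s_n` is the number of
splittings of an `n`-dimensional `F_q`-vector space. -/
theorem splittings_generating_series (F : Type) [Field F] [Fintype F] :
    PowerSeries.mk (fun n => (splitCount F n : ℚ) / (gammaQ (Fintype.card F) n : ℚ)) =
      expComp (PowerSeries.mk fun n =>
        if n = 0 then 0 else 1 / (gammaQ (Fintype.card F) n : ℚ)) := by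
  exact splittings_generating_series' F
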